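/- For a non-degenerate solution of the discrete Schroedinger equation, the cross-ratio of four consecutive points of the projective configuration equals the product of consecutive potentials: s_n := [η_n, η_{n+1}, η_{n+2}, η_{n+3}] = ((η_n - η_{n+2})/(η_n - η_{n+1}))·((η_{n+1} - η_{n+3})/(η_{n+2} - η_{n+3})) satisfies s_n = u_n · u_{n+1}. -/

import Mathlib

/-- The cross-ratio of four consecutive points of the projective configuration
equals the product of consecutive potentials: `s_n = u_n · u_{n+1}`. -/
theorem cross_ratio_eq_potential_product (u φ ψ : ℤ → ℂ)
    (hφ : ∀ n, φ (n + 2) + u n * φ (n + 1) + φ n = 0)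
    (hψ : ∀ n, ψ (n + 2) + u n * ψ (n + 1) + ψ n = 0)
    (hW : ∀ n, φ n * ψ (n - 1) - φ (n - 1) * ψ n = 1)
    (hψ0 : ∀ n, ψ n ≠ 0)
    (η : ℤ → ℂ) (hη : ∀ n, η n = φ n / ψ n)
    (hnd : ∀ n, η n ≠ η (n + 1))
    (n : ℤ)
    (h1 : η n - η (n + 1) ≠ 0) (h2 : η (n + 2) - η (n + 3) ≠ 0) :
    (η n - η (n + 2)) / (η n - η (n + 1))
      * ((η (n + 1) - η (n + 3)) / (η (n + 2) - η (n + 3)))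
    = u n * u (n + 1) := by
  have W : ∀ k : ℤ, φ (k + 1) * ψ k - φ k * ψ (k + 1) = 1 := by
    intro k
    have := hW (k + 1)
    simpa using this
  have h0 := hψ0 n
  have h1' := hψ0 (n + 1)
  have h2' := hψ0 (n + 2)
  have h3' := hψ0 (n + 3)
  have d1 : η n - η (n + 1) = -1 / (ψ n * ψ (n + 1)) := by
    have hw := W n
    simp only [hη]
    rw [div_sub_div _ _ h0 h1']
    congr 1
    linear_combination -hw
  have d2 : η (n + 2) - η (n + 3) = -1 / (ψ (n + 2) * ψ (n + 3)) := by
    have hw := W (n + 2)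
    have e : n + 2 + 1 = n + 3 := by ring
    rw [e] at hw
    simp only [hη]
    rw [div_sub_div _ _ h2' h3']
    congr 1
    linear_combination -hw
  have e1 : η n - η (n + 2) = u n / (ψ n * ψ (n + 2)) := by
    have hf := hφ n
    have hg := hψ n
    have hw := W n
    have key : φ n * ψ (n + 2) - φ (n + 2) * ψ n = u n := by
      linear_combination φ n * hg - ψ n * hf + u n * hw
    simp only [hη]
    rw [div_sub_div _ _ h0 h2']
    congr 1
    linear_combination key
  have e2 : η (n + 1) - η (n + 3) = u (n + 1) / (ψ (n + 1) * ψ (n + 3)) := by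
    rw [hη, hη]
    have hf := hφ (n + 1)
    have hg := hψ (n + 1)
    have hw := W (n + 1)
    have e : n + 1 + 2 = n + 3 := by ring
    have e' : n + 1 + 1 = n + 2 := by ring
    rw [e, e'] at hf hg
    rw [e'] at hw
    have key : φ (n + 1) * ψ (n + 3) - φ (n + 3) * ψ (n + 1) = u (n + 1) := by
      linear_combination φ (n + 1) * hg - ψ (n + 1) * hf + u (n + 1) * hw
    rw [div_sub_div _ _ h1' h3']
    congr 1
    linear_combination key
  rw [d1, d2, e1, e2]
  field_simp
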